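/- Let α ∈ (0,2) and let the sequence {ξ^k} be generated, for k = 0,1,…,N+1, by the parallel splitting ALM step (producing w̃^k and ξ̃^k from ξ^k) followed by the rank-two relaxation step ξ^{k+1} = ξ^k − αℳ(ξ^k − ξ̃^k). Then for every ξ* ∈ Ξ*: ‖ξ^N − ξ^{N+1}‖²_ℋ ≤ (α/((2 − α)(N+1)))‖ξ^0 − ξ*‖²_ℋ. -/

import Mathlib

open Matrix
open scoped Kronecker

noncomputable section

/-- `Q₀ = [β I_p, e_p; −e_pᵀ, 1/β]`. -/
def Q0 (p : ℕ) (β : ℝ) : Matrix (Fin p ⊕ Unit) (Fin p ⊕ Unit) ℝ :=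
  Matrix.fromBlocks (β • (1 : Matrix (Fin p) (Fin p) ℝ))
    (Matrix.of fun _ _ => (1 : ℝ))
    (Matrix.of fun _ _ => (-1 : ℝ))
    (Matrix.of fun _ _ => 1 / β)

/-- `D₀ = diag(β, …, β, 1/β)`. -/
def D0 (p : ℕ) (β : ℝ) : Matrix (Fin p ⊕ Unit) (Fin p ⊕ Unit) ℝ :=
  Matrix.fromBlocks (β • (1 : Matrix (Fin p) (Fin p) ℝ)) 0 0
    (Matrix.of fun _ _ => 1 / β)

/-- `M₀ = I_{p+1} − (1/(p+1))·[e_p e_pᵀ, −(1/β)e_p; β e_pᵀ, p]`. -/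
def M0 (p : ℕ) (β : ℝ) : Matrix (Fin p ⊕ Unit) (Fin p ⊕ Unit) ℝ :=
  1 - (1 / (p + 1 : ℝ)) •
    Matrix.fromBlocks (Matrix.of fun _ _ => (1 : ℝ))
      (Matrix.of fun _ _ => -(1 / β))
      (Matrix.of fun _ _ => (β : ℝ))
      (Matrix.of fun _ _ => (p : ℝ))

/-- `H₀ = [β(I_p + e_p e_pᵀ), 0; 0, (p+1)/β]`. -/
def H0 (p : ℕ) (β : ℝ) : Matrix (Fin p ⊕ Unit) (Fin p ⊕ Unit) ℝ :=
  Matrix.fromBlocks (β • ((1 : Matrix (Fin p) (Fin p) ℝ) + Matrix.of fun _ _ => (1 : ℝ))) 0 0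
    (Matrix.of fun _ _ => (p + 1 : ℝ) / β)

/-- `𝒬 = Q₀ ⊗ I_m`. -/
def calQ (p m : ℕ) (β : ℝ) : Matrix ((Fin p ⊕ Unit) × Fin m) ((Fin p ⊕ Unit) × Fin m) ℝ :=
  Q0 p β ⊗ₖ (1 : Matrix (Fin m) (Fin m) ℝ)

/-- `𝒟 = D₀ ⊗ I_m`. -/
def calD (p m : ℕ) (β : ℝ) : Matrix ((Fin p ⊕ Unit) × Fin m) ((Fin p ⊕ Unit) × Fin m) ℝ :=
  D0 p β ⊗ₖ (1 : Matrix (Fin m) (Fin m) ℝ)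

/-- `ℳ = M₀ ⊗ I_m`. -/
def calM (p m : ℕ) (β : ℝ) : Matrix ((Fin p ⊕ Unit) × Fin m) ((Fin p ⊕ Unit) × Fin m) ℝ :=
  M0 p β ⊗ₖ (1 : Matrix (Fin m) (Fin m) ℝ)

/-- `ℋ = H₀ ⊗ I_m`. -/
def calH (p m : ℕ) (β : ℝ) : Matrix ((Fin p ⊕ Unit) × Fin m) ((Fin p ⊕ Unit) × Fin m) ℝ :=
  H0 p β ⊗ₖ (1 : Matrix (Fin m) (Fin m) ℝ)

/-- `‖v‖²_G = vᵀ G v`. -/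
def nsq {p m : ℕ} (G : Matrix ((Fin p ⊕ Unit) × Fin m) ((Fin p ⊕ Unit) × Fin m) ℝ)
    (v : (Fin p ⊕ Unit) × Fin m → ℝ) : ℝ :=
  v ⬝ᵥ G.mulVec v

/-- `θ(x) = Σ_i θ_i(x_i)`. -/
def thetaSum {p : ℕ} {n : Fin p → ℕ} (θ : (i : Fin p) → (Fin (n i) → ℝ) → ℝ)
    (x : (i : Fin p) → Fin (n i) → ℝ) : ℝ :=
  ∑ i, θ i (x i)

/-- The Euclidean inner product on `ℝ^{n_1}×⋯×ℝ^{n_p}×ℝ^m`. -/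
def dotW {p m : ℕ} {n : Fin p → ℕ}
    (w w' : ((i : Fin p) → Fin (n i) → ℝ) × (Fin m → ℝ)) : ℝ :=
  (∑ i, w.1 i ⬝ᵥ w'.1 i) + w.2 ⬝ᵥ w'.2

/-- `F(w) = (−A_1ᵀλ, …, −A_pᵀλ, Σ_i A_i x_i − b)`. -/
def Fop {p m : ℕ} {n : Fin p → ℕ} (A : (i : Fin p) → Matrix (Fin m) (Fin (n i)) ℝ)
    (b : Fin m → ℝ) (w : ((i : Fin p) → Fin (n i) → ℝ) × (Fin m → ℝ)) :
    ((i : Fin p) → Fin (n i) → ℝ) × (Fin m → ℝ) :=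
  (fun i => -((A i)ᵀ.mulVec w.2), (∑ i, (A i).mulVec (w.1 i)) - b)

/-- `Pw = (A_1 x_1, …, A_p x_p, λ) ∈ ℝ^{(p+1)m}`. -/
def Pmap {p m : ℕ} {n : Fin p → ℕ} (A : (i : Fin p) → Matrix (Fin m) (Fin (n i)) ℝ)
    (w : ((i : Fin p) → Fin (n i) → ℝ) × (Fin m → ℝ)) :
    (Fin p ⊕ Unit) × Fin m → ℝ :=
  fun q => Sum.elim (fun i => (A i).mulVec (w.1 i) q.2) (fun _ => w.2 q.2) q.1

/-- `Ω = 𝒳_1 × ⋯ × 𝒳_p × ℝ^m`. -/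
def OmegaSet {p : ℕ} (m : ℕ) {n : Fin p → ℕ} (X : (i : Fin p) → Set (Fin (n i) → ℝ)) :
    Set (((i : Fin p) → Fin (n i) → ℝ) × (Fin m → ℝ)) :=
  {w | ∀ i, w.1 i ∈ X i}

/-- The solution set `Ω*` of the variational inequality VI(Ω,F,θ). -/
def VIsol {p m : ℕ} {n : Fin p → ℕ} (θ : (i : Fin p) → (Fin (n i) → ℝ) → ℝ)
    (X : (i : Fin p) → Set (Fin (n i) → ℝ))
    (A : (i : Fin p) → Matrix (Fin m) (Fin (n i)) ℝ) (b : Fin m → ℝ) :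
    Set (((i : Fin p) → Fin (n i) → ℝ) × (Fin m → ℝ)) :=
  {ws | ws ∈ OmegaSet m X ∧ ∀ w ∈ OmegaSet m X,
    thetaSum θ w.1 - thetaSum θ ws.1 + dotW (w - ws) (Fop A b ws) ≥ 0}

/-- The `λ`-component of `ξ = (u_1, …, u_p, λ)`. -/
def lamOf {p m : ℕ} (ξ : (Fin p ⊕ Unit) × Fin m → ℝ) : Fin m → ℝ :=
  fun j => ξ (Sum.inr (), j)

/-- The `u_i`-component of `ξ = (u_1, …, u_p, λ)`. -/
def uOf {p m : ℕ} (ξ : (Fin p ⊕ Unit) × Fin m → ℝ) (i : Fin p) : Fin m → ℝ :=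
  fun j => ξ (Sum.inl i, j)

/-- The parallel splitting ALM step: with input `ξ = (u_1, …, u_p, λ)` it produces
`w̃ = (x̃_1, …, x̃_p, λ̃)` where each `x̃_i ∈ 𝒳_i` minimizes
`x_i ↦ θ_i(x_i) − λᵀ A_i x_i + (β/2)‖A_i x_i − u_i‖²` over `𝒳_i`, and
`λ̃ = λ − β(Σ_i u_i − b)`. -/
def ALMStep {p m : ℕ} {n : Fin p → ℕ} (β : ℝ) (θ : (i : Fin p) → (Fin (n i) → ℝ) → ℝ)
    (X : (i : Fin p) → Set (Fin (n i) → ℝ))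
    (A : (i : Fin p) → Matrix (Fin m) (Fin (n i)) ℝ) (b : Fin m → ℝ)
    (ξ : (Fin p ⊕ Unit) × Fin m → ℝ)
    (wt : ((i : Fin p) → Fin (n i) → ℝ) × (Fin m → ℝ)) : Prop :=
  (∀ i, wt.1 i ∈ X i ∧ ∀ y ∈ X i,
      θ i (wt.1 i) - lamOf ξ ⬝ᵥ (A i).mulVec (wt.1 i) +
          β / 2 * (((A i).mulVec (wt.1 i) - uOf ξ i) ⬝ᵥ ((A i).mulVec (wt.1 i) - uOf ξ i)) ≤
        θ i y - lamOf ξ ⬝ᵥ (A i).mulVec y +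
          β / 2 * (((A i).mulVec y - uOf ξ i) ⬝ᵥ ((A i).mulVec y - uOf ξ i))) ∧
  wt.2 = lamOf ξ - β • ((∑ i, uOf ξ i) - b)

lemma pne (p : ℕ) : ((p:ℝ) + 1) ≠ 0 := by positivity

lemma sum_ite_mul_aux {p : ℕ} (i : Fin p) (c d : ℝ) :
    ∑ x : Fin p, ((if i = x then c else 0) + d) = c + p * d := by
  simp [Finset.sum_add_distrib, Finset.sum_ite_eq, Finset.sum_const, Finset.card_univ, mul_comm]

lemma H0_mul_M0 (p : ℕ) {β : ℝ} (hβ : β ≠ 0) : H0 p β * M0 p β = Q0 p β := by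
  have hp1 : ((p:ℝ) + 1) ≠ 0 := pne p
  ext i j
  rcases i with i | i <;> rcases j with j | j <;>
    simp only [H0, M0, Q0, Matrix.mul_apply, Matrix.fromBlocks, Matrix.one_apply,
      Fintype.sum_sum_type, Matrix.of_apply, Sum.elim_inl, Sum.elim_inr, Matrix.sub_apply,
      Matrix.smul_apply, smul_eq_mul, Matrix.add_apply, Matrix.zero_apply, Sum.inl.injEq,
      Sum.inr.injEq, mul_ite, mul_zero, mul_one, ite_mul, zero_mul, one_mul, add_mul, mul_add,
      sub_mul, mul_sub, Finset.sum_add_distrib, Finset.sum_sub_distrib, Finset.sum_ite_eq,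
      Finset.sum_ite_eq', Finset.mem_univ, if_true, Finset.sum_const, Finset.card_univ,
      Fintype.card_fin, nsmul_eq_mul, zero_add, add_zero, zero_sub, sub_zero, neg_mul, mul_neg,
      Finset.sum_neg_distrib, neg_neg, Finset.sum_singleton, Finset.univ_unique,
      PUnit.default_eq_unit, Finset.card_singleton, Nat.cast_one]
  all_goals try split_ifs with h
  all_goals try field_simp
  all_goals ring

lemma M0T_mul_Q0 (p : ℕ) {β : ℝ} (hβ : β ≠ 0) : (M0 p β)ᵀ * Q0 p β = D0 p β := by
  have hp1 : ((p:ℝ) + 1) ≠ 0 := pne p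
  ext i j
  rcases i with i | i <;> rcases j with j | j <;>
    simp only [M0, Q0, D0, Matrix.mul_apply, Matrix.fromBlocks, Matrix.one_apply,
      Matrix.transpose_apply, Fintype.sum_sum_type, Matrix.of_apply, Sum.elim_inl, Sum.elim_inr,
      Matrix.sub_apply, Matrix.smul_apply, smul_eq_mul, Matrix.add_apply, Matrix.zero_apply,
      Sum.inl.injEq, Sum.inr.injEq, mul_ite, mul_zero, mul_one, ite_mul, zero_mul, one_mul,
      add_mul, mul_add, sub_mul, mul_sub, Finset.sum_add_distrib, Finset.sum_sub_distrib,
      Finset.sum_ite_eq, Finset.sum_ite_eq', Finset.mem_univ, if_true, Finset.sum_const,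
      Finset.card_univ, Fintype.card_fin, nsmul_eq_mul, zero_add, add_zero, zero_sub, sub_zero,
      neg_mul, mul_neg, Finset.sum_neg_distrib, neg_neg, Finset.sum_singleton,
      Finset.univ_unique, PUnit.default_eq_unit, Finset.card_singleton, Nat.cast_one]
  all_goals try split_ifs with h
  all_goals try field_simp
  all_goals ring

lemma calH_mul_calM (p m : ℕ) {β : ℝ} (hβ : β ≠ 0) : calH p m β * calM p m β = calQ p m β := by
  rw [calH, calM, calQ, ← Matrix.mul_kronecker_mul, H0_mul_M0 p hβ, Matrix.one_mul]

lemma calMT_mul_calQ (p m : ℕ) {β : ℝ} (hβ : β ≠ 0) : (calM p m β)ᵀ * calQ p m β = calD p m β := by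
  rw [calM, calQ, calD, ← Matrix.kroneckerMap_transpose, Matrix.transpose_one,
    ← Matrix.mul_kronecker_mul, M0T_mul_Q0 p hβ, Matrix.one_mul]

-- bilinear expansion of a kronecker-with-identity quadratic form

lemma dot_kron {pp mm : ℕ} (G : Matrix (Fin pp ⊕ Unit) (Fin pp ⊕ Unit) ℝ)
    (a c : (Fin pp ⊕ Unit) × Fin mm → ℝ) :
    a ⬝ᵥ (G ⊗ₖ (1 : Matrix (Fin mm) (Fin mm) ℝ)).mulVec c =
      ∑ q, ∑ q', G q q' * ((fun j => a (q, j)) ⬝ᵥ fun j => c (q', j)) := by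
  simp only [dotProduct, Matrix.mulVec, Matrix.kroneckerMap_apply, dotProduct,
    Fintype.sum_prod_type, Matrix.one_apply, mul_ite, mul_one, mul_zero, ite_mul, zero_mul,
    Finset.mul_sum, Finset.sum_ite_eq', Finset.mem_univ, if_true]
  simp only [Finset.sum_ite_eq, Finset.mem_univ, if_true]
  refine Finset.sum_congr rfl fun q _ => ?_
  rw [Finset.sum_comm]
  refine Finset.sum_congr rfl fun q' _ => ?_
  refine Finset.sum_congr rfl fun j _ => ?_
  ring

lemma Bq_eq {p m : ℕ} (β : ℝ) (a c : (Fin p ⊕ Unit) × Fin m → ℝ) :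
    a ⬝ᵥ (calQ p m β).mulVec c =
      β * ∑ i, uOf a i ⬝ᵥ uOf c i + (∑ i, uOf a i ⬝ᵥ lamOf c)
        - (∑ i, lamOf a ⬝ᵥ uOf c i) + 1 / β * (lamOf a ⬝ᵥ lamOf c) := by
  rw [calQ, dot_kron]
  simp only [Fintype.sum_sum_type, Finset.univ_unique, Finset.sum_singleton,
    PUnit.default_eq_unit, Q0, Matrix.fromBlocks_apply₁₁, Matrix.fromBlocks_apply₁₂,
    Matrix.fromBlocks_apply₂₁, Matrix.fromBlocks_apply₂₂, Matrix.smul_apply,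
    Matrix.one_apply, smul_eq_mul, mul_ite, mul_one, mul_zero, ite_mul, zero_mul,
    Matrix.of_apply, Finset.sum_ite_eq, Finset.mem_univ, if_true, neg_mul,
    Finset.sum_neg_distrib, Finset.mul_sum]
  unfold uOf lamOf dotProduct
  simp only [one_mul, Finset.sum_add_distrib]
  ring

lemma Bd_eq {p m : ℕ} (β : ℝ) (a c : (Fin p ⊕ Unit) × Fin m → ℝ) :
    a ⬝ᵥ (calD p m β).mulVec c =
      β * ∑ i, uOf a i ⬝ᵥ uOf c i + 1 / β * (lamOf a ⬝ᵥ lamOf c) := by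
  rw [calD, dot_kron]
  simp only [Fintype.sum_sum_type, Finset.univ_unique, Finset.sum_singleton,
    PUnit.default_eq_unit, D0, Matrix.fromBlocks_apply₁₁, Matrix.fromBlocks_apply₁₂,
    Matrix.fromBlocks_apply₂₁, Matrix.fromBlocks_apply₂₂, Matrix.smul_apply,
    Matrix.one_apply, smul_eq_mul, mul_ite, mul_one, mul_zero, ite_mul, zero_mul,
    Matrix.of_apply, Finset.sum_ite_eq, Finset.mem_univ, if_true, Matrix.zero_apply,
    Finset.sum_const_zero, add_zero, zero_add, Finset.mul_sum]
  unfold uOf lamOf dotProduct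
  simp only [one_mul, Finset.sum_add_distrib]

lemma Bh_eq {p m : ℕ} (β : ℝ) (a c : (Fin p ⊕ Unit) × Fin m → ℝ) :
    a ⬝ᵥ (calH p m β).mulVec c =
      β * ∑ i, uOf a i ⬝ᵥ uOf c i + β * ∑ i, ∑ i', uOf a i ⬝ᵥ uOf c i'
        + (p + 1) / β * (lamOf a ⬝ᵥ lamOf c) := by
  rw [calH, dot_kron]
  simp only [Fintype.sum_sum_type, Finset.univ_unique, Finset.sum_singleton,
    PUnit.default_eq_unit, H0, Matrix.fromBlocks_apply₁₁, Matrix.fromBlocks_apply₁₂,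
    Matrix.fromBlocks_apply₂₁, Matrix.fromBlocks_apply₂₂, Matrix.smul_apply,
    Matrix.one_apply, smul_eq_mul, mul_ite, mul_one, mul_zero, ite_mul, zero_mul,
    Matrix.of_apply, Finset.sum_ite_eq, Finset.mem_univ, if_true, Matrix.zero_apply,
    Finset.sum_const_zero, add_zero, zero_add, Matrix.add_apply, add_mul, mul_add,
    Finset.sum_add_distrib, Finset.mul_sum]
  unfold uOf lamOf dotProduct
  simp only [one_mul, Finset.sum_add_distrib]
  try ring

lemma dot_self_nonneg' {m : ℕ} (v : Fin m → ℝ) : 0 ≤ v ⬝ᵥ v :=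
  Finset.sum_nonneg fun j _ => mul_self_nonneg _

lemma sum_dot {p m : ℕ} (f : Fin p → Fin m → ℝ) (v : Fin m → ℝ) :
    (∑ i, f i) ⬝ᵥ v = ∑ i, f i ⬝ᵥ v := by
  simp only [dotProduct, Finset.sum_apply, Finset.sum_mul]
  exact Finset.sum_comm

lemma dot_sum {p m : ℕ} (v : Fin m → ℝ) (f : Fin p → Fin m → ℝ) :
    v ⬝ᵥ (∑ i, f i) = ∑ i, v ⬝ᵥ f i := by
  simp only [dotProduct, Finset.sum_apply, Finset.mul_sum]
  exact Finset.sum_comm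

lemma sum_sum_dot {p m : ℕ} (f g : Fin p → Fin m → ℝ) :
    ∑ i, ∑ i', f i ⬝ᵥ g i' = (∑ i, f i) ⬝ᵥ (∑ i, g i) := by
  rw [sum_dot]
  exact Finset.sum_congr rfl fun i _ => (dot_sum _ _).symm

lemma Bd_nonneg {p m : ℕ} {β : ℝ} (hβ : 0 < β) (v : (Fin p ⊕ Unit) × Fin m → ℝ) :
    0 ≤ v ⬝ᵥ (calD p m β).mulVec v := by
  rw [Bd_eq]
  have h1 : 0 ≤ ∑ i, uOf v i ⬝ᵥ uOf v i :=
    Finset.sum_nonneg fun i _ => dot_self_nonneg' _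
  have h2 : 0 ≤ lamOf v ⬝ᵥ lamOf v := dot_self_nonneg' _
  have := hβ.le
  positivity

lemma Bh_nonneg {p m : ℕ} {β : ℝ} (hβ : 0 < β) (v : (Fin p ⊕ Unit) × Fin m → ℝ) :
    0 ≤ v ⬝ᵥ (calH p m β).mulVec v := by
  rw [Bh_eq, sum_sum_dot]
  have h1 : 0 ≤ ∑ i, uOf v i ⬝ᵥ uOf v i :=
    Finset.sum_nonneg fun i _ => dot_self_nonneg' _
  have h2 : 0 ≤ lamOf v ⬝ᵥ lamOf v := dot_self_nonneg' _
  have h3 : 0 ≤ (∑ i, uOf v i) ⬝ᵥ (∑ i, uOf v i) := dot_self_nonneg' _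
  have hb := hβ.le
  have hp1 : (0:ℝ) ≤ (p + 1) / β := by positivity
  nlinarith [mul_nonneg hb h1, mul_nonneg hb h3, mul_nonneg hp1 h2]

lemma Bh_symm {p m : ℕ} (β : ℝ) (a c : (Fin p ⊕ Unit) × Fin m → ℝ) :
    a ⬝ᵥ (calH p m β).mulVec c = c ⬝ᵥ (calH p m β).mulVec a := by
  rw [Bh_eq, Bh_eq, sum_sum_dot, sum_sum_dot]
  rw [dotProduct_comm (lamOf a), dotProduct_comm (∑ i, uOf a i)]
  have : ∑ i, uOf a i ⬝ᵥ uOf c i = ∑ i, uOf c i ⬝ᵥ uOf a i :=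
    Finset.sum_congr rfl fun i _ => dotProduct_comm _ _
  rw [this]

lemma Bd_symm {p m : ℕ} (β : ℝ) (a c : (Fin p ⊕ Unit) × Fin m → ℝ) :
    a ⬝ᵥ (calD p m β).mulVec c = c ⬝ᵥ (calD p m β).mulVec a := by
  rw [Bd_eq, Bd_eq, dotProduct_comm (lamOf a)]
  have : ∑ i, uOf a i ⬝ᵥ uOf c i = ∑ i, uOf c i ⬝ᵥ uOf a i :=
    Finset.sum_congr rfl fun i _ => dotProduct_comm _ _
  rw [this]

lemma Bq_self {p m : ℕ} (β : ℝ) (a : (Fin p ⊕ Unit) × Fin m → ℝ) :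
    a ⬝ᵥ (calQ p m β).mulVec a = a ⬝ᵥ (calD p m β).mulVec a := by
  rw [Bq_eq, Bd_eq]
  have : ∑ i, uOf a i ⬝ᵥ lamOf a = ∑ i, lamOf a ⬝ᵥ uOf a i :=
    Finset.sum_congr rfl fun i _ => dotProduct_comm _ _
  rw [this]; ring

lemma hm_eq_q {p m : ℕ} {β : ℝ} (hβ : β ≠ 0) (a c : (Fin p ⊕ Unit) × Fin m → ℝ) :
    a ⬝ᵥ (calH p m β).mulVec ((calM p m β).mulVec c) = a ⬝ᵥ (calQ p m β).mulVec c := by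
  rw [Matrix.mulVec_mulVec, calH_mul_calM p m hβ]

lemma mq_eq_d {p m : ℕ} {β : ℝ} (hβ : β ≠ 0) (a c : (Fin p ⊕ Unit) × Fin m → ℝ) :
    (calM p m β).mulVec a ⬝ᵥ (calQ p m β).mulVec c = a ⬝ᵥ (calD p m β).mulVec c := by
  rw [Matrix.dotProduct_mulVec, ← Matrix.mulVec_transpose, Matrix.mulVec_mulVec]
  have : (calQ p m β)ᵀ * calM p m β = (calD p m β)ᵀ := by
    rw [← calMT_mul_calQ p m hβ, Matrix.transpose_mul, Matrix.transpose_transpose]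
  rw [this, Matrix.mulVec_transpose, ← Matrix.dotProduct_mulVec]

lemma mhm_eq_d {p m : ℕ} {β : ℝ} (hβ : β ≠ 0) (a c : (Fin p ⊕ Unit) × Fin m → ℝ) :
    (calM p m β).mulVec a ⬝ᵥ (calH p m β).mulVec ((calM p m β).mulVec c)
      = a ⬝ᵥ (calD p m β).mulVec c := by
  rw [hm_eq_q hβ, mq_eq_d hβ]

lemma dot_expand {m : ℕ} (v d : Fin m → ℝ) (t : ℝ) :
    (v + t • d) ⬝ᵥ (v + t • d) = v ⬝ᵥ v + 2 * t * (v ⬝ᵥ d) + t ^ 2 * (d ⬝ᵥ d) := by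
  simp only [dotProduct_add, add_dotProduct, dotProduct_smul,
    smul_dotProduct, smul_eq_mul, dotProduct_comm d v]
  ring

lemma blockVI {p m : ℕ} {n : Fin p → ℕ} {β : ℝ} (hβ : 0 < β)
    (θ : (i : Fin p) → (Fin (n i) → ℝ) → ℝ) (hθ : ∀ i, ConvexOn ℝ Set.univ (θ i))
    (X : (i : Fin p) → Set (Fin (n i) → ℝ)) (hXconv : ∀ i, Convex ℝ (X i))
    (A : (i : Fin p) → Matrix (Fin m) (Fin (n i)) ℝ) (b : Fin m → ℝ)
    {ξ : (Fin p ⊕ Unit) × Fin m → ℝ}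
    {wt : ((i : Fin p) → Fin (n i) → ℝ) × (Fin m → ℝ)}
    (h : ALMStep β θ X A b ξ wt) (i : Fin p) (y : Fin (n i) → ℝ) (hy : y ∈ X i) :
    0 ≤ θ i y - θ i (wt.1 i) +
      ((A i).mulVec y - (A i).mulVec (wt.1 i)) ⬝ᵥ
        (β • ((A i).mulVec (wt.1 i) - uOf ξ i) - lamOf ξ) := by
  obtain ⟨hmem, hmin⟩ := h.1 i
  set x := wt.1 i with hx
  set d : Fin m → ℝ := (A i).mulVec y - (A i).mulVec x with hd
  set c : ℝ := θ i y - θ i x + d ⬝ᵥ (β • ((A i).mulVec x - uOf ξ i) - lamOf ξ) with hc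
  have hK : 0 ≤ d ⬝ᵥ d := dot_self_nonneg' d
  have key : ∀ t : ℝ, 0 < t → t ≤ 1 → 0 ≤ c + t * (β / 2 * (d ⬝ᵥ d)) := by
    intro t ht ht1
    have hz : x + t • (y - x) ∈ X i := by
      have := (hXconv i) hmem hy (by linarith : (0:ℝ) ≤ 1 - t) ht.le (by ring)
      convert this using 1
      module
    have hmin' := hmin _ hz
    have hθz : θ i (x + t • (y - x)) ≤ θ i x + t * (θ i y - θ i x) := by
      have := (hθ i).2 (Set.mem_univ x) (Set.mem_univ y)
        (by linarith : (0:ℝ) ≤ 1 - t) ht.le (by ring)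
      have he : (1 - t) • x + t • y = x + t • (y - x) := by module
      rw [he] at this
      simp only [smul_eq_mul] at this
      linarith
    have hAz : (A i).mulVec (x + t • (y - x)) = (A i).mulVec x + t • d := by
      rw [Matrix.mulVec_add, Matrix.mulVec_smul, Matrix.mulVec_sub, hd]
    rw [hAz] at hmin'
    have hlam : lamOf ξ ⬝ᵥ ((A i).mulVec x + t • d)
        = lamOf ξ ⬝ᵥ (A i).mulVec x + t * (lamOf ξ ⬝ᵥ d) := by
      simp [dotProduct_add, dotProduct_smul, smul_eq_mul]
    have hquad : ((A i).mulVec x + t • d - uOf ξ i) ⬝ᵥ ((A i).mulVec x + t • d - uOf ξ i)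
        = ((A i).mulVec x - uOf ξ i) ⬝ᵥ ((A i).mulVec x - uOf ξ i)
          + 2 * t * (((A i).mulVec x - uOf ξ i) ⬝ᵥ d) + t ^ 2 * (d ⬝ᵥ d) := by
      have : (A i).mulVec x + t • d - uOf ξ i = ((A i).mulVec x - uOf ξ i) + t • d := by
        module
      rw [this, dot_expand]
    rw [hlam, hquad] at hmin'
    have hcd : d ⬝ᵥ (β • ((A i).mulVec x - uOf ξ i) - lamOf ξ)
        = β * (((A i).mulVec x - uOf ξ i) ⬝ᵥ d) - lamOf ξ ⬝ᵥ d := by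
      simp only [dotProduct_sub, dotProduct_smul, smul_eq_mul,
        dotProduct_comm d, sub_dotProduct, smul_dotProduct]
    have hc' : c = θ i y - θ i x + β * (((A i).mulVec x - uOf ξ i) ⬝ᵥ d) - lamOf ξ ⬝ᵥ d := by
      rw [hc, hcd]; ring
    nlinarith [hmin', hθz]
  by_contra hcon
  push_neg at hcon
  set K : ℝ := β / 2 * (d ⬝ᵥ d) with hKdef
  have hK0 : 0 ≤ K := by positivity
  have ht0 : 0 < min 1 (-c / (2 * (K + 1))) := by
    apply lt_min one_pos
    apply div_pos (by linarith) (by linarith)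
  have := key _ ht0 (min_le_left _ _)
  have h2 : min 1 (-c / (2 * (K + 1))) * K ≤ (-c / (2 * (K + 1))) * K :=
    mul_le_mul_of_nonneg_right (min_le_right _ _) hK0
  have h3 : (-c / (2 * (K + 1))) * K ≤ -c / 2 := by
    rw [div_mul_eq_mul_div, div_le_div_iff₀ (by linarith) (by norm_num)]
    nlinarith
  linarith

lemma uOf_sub {p m : ℕ} (ξ η : (Fin p ⊕ Unit) × Fin m → ℝ) (i : Fin p) :
    uOf (ξ - η) i = uOf ξ i - uOf η i := rfl

lemma lamOf_sub {p m : ℕ} (ξ η : (Fin p ⊕ Unit) × Fin m → ℝ) :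
    lamOf (ξ - η) = lamOf ξ - lamOf η := rfl

lemma uOf_Pmap {p m : ℕ} {n : Fin p → ℕ} (A : (i : Fin p) → Matrix (Fin m) (Fin (n i)) ℝ)
    (w : ((i : Fin p) → Fin (n i) → ℝ) × (Fin m → ℝ)) (i : Fin p) :
    uOf (Pmap A w) i = (A i).mulVec (w.1 i) := rfl

lemma lamOf_Pmap {p m : ℕ} {n : Fin p → ℕ} (A : (i : Fin p) → Matrix (Fin m) (Fin (n i)) ℝ)
    (w : ((i : Fin p) → Fin (n i) → ℝ) × (Fin m → ℝ)) :
    lamOf (Pmap A w) = w.2 := rfl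

lemma fund {p m : ℕ} {n : Fin p → ℕ} {β : ℝ} (hβ : 0 < β)
    (θ : (i : Fin p) → (Fin (n i) → ℝ) → ℝ) (hθ : ∀ i, ConvexOn ℝ Set.univ (θ i))
    (X : (i : Fin p) → Set (Fin (n i) → ℝ)) (hXconv : ∀ i, Convex ℝ (X i))
    (A : (i : Fin p) → Matrix (Fin m) (Fin (n i)) ℝ) (b : Fin m → ℝ)
    {ξ : (Fin p ⊕ Unit) × Fin m → ℝ}
    {wt : ((i : Fin p) → Fin (n i) → ℝ) × (Fin m → ℝ)}
    (h : ALMStep β θ X A b ξ wt)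
    (w : ((i : Fin p) → Fin (n i) → ℝ) × (Fin m → ℝ)) (hw : w ∈ OmegaSet m X) :
    (Pmap A w - Pmap A wt) ⬝ᵥ (calQ p m β).mulVec (ξ - Pmap A wt)
      ≤ thetaSum θ w.1 - thetaSum θ wt.1 + dotW (w - wt) (Fop A b wt) := by
  have hβ' : β ≠ 0 := hβ.ne'
  set aa : Fin p → Fin m → ℝ := fun i => (A i).mulVec (w.1 i) - (A i).mulVec (wt.1 i) with haa
  set bb : Fin p → Fin m → ℝ := fun i => uOf ξ i - (A i).mulVec (wt.1 i) with hbb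
  set L : Fin m → ℝ := lamOf ξ with hL
  set dl : Fin m → ℝ := w.2 - wt.2 with hdl
  set bl : Fin m → ℝ := L - wt.2 with hbl
  -- LHS via Bq_eq
  have hLHS : (Pmap A w - Pmap A wt) ⬝ᵥ (calQ p m β).mulVec (ξ - Pmap A wt)
      = β * ∑ i, aa i ⬝ᵥ bb i + (∑ i, aa i ⬝ᵥ bl) - (∑ i, dl ⬝ᵥ bb i)
        + 1 / β * (dl ⬝ᵥ bl) := by
    rw [Bq_eq]
    simp only [uOf_sub, lamOf_sub, uOf_Pmap, lamOf_Pmap]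
    rfl
  -- RHS dotW expansion
  have hdotW : dotW (w - wt) (Fop A b wt)
      = (∑ i, -(aa i ⬝ᵥ wt.2)) + (∑ i, dl ⬝ᵥ (A i).mulVec (wt.1 i)) - dl ⬝ᵥ b := by
    unfold dotW Fop
    simp only [Prod.fst_sub, Prod.snd_sub, Pi.sub_apply]
    have h1 : ∀ i, (w.1 i - wt.1 i) ⬝ᵥ -((A i)ᵀ.mulVec wt.2) = -(aa i ⬝ᵥ wt.2) := by
      intro i
      rw [dotProduct_neg, Matrix.dotProduct_mulVec, Matrix.vecMul_transpose,
        Matrix.mulVec_sub]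
    rw [Finset.sum_congr rfl fun i _ => h1 i]
    rw [dotProduct_sub, dot_sum]
    ring
  -- block inequalities summed
  have key : ∀ i ∈ Finset.univ, β * (aa i ⬝ᵥ bb i) + aa i ⬝ᵥ L ≤ θ i (w.1 i) - θ i (wt.1 i) := by
    intro i _
    have h0 := blockVI hβ θ hθ X hXconv A b h i (w.1 i) (hw i)
    have he : (A i).mulVec (w.1 i) - (A i).mulVec (wt.1 i) = aa i := rfl
    have hrw : aa i ⬝ᵥ (β • ((A i).mulVec (wt.1 i) - uOf ξ i) - L)
        = -(β * (aa i ⬝ᵥ bb i)) - aa i ⬝ᵥ L := by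
      have h5 : (A i).mulVec (wt.1 i) - uOf ξ i = -(bb i) := by rw [hbb]; simp
      rw [h5]
      simp only [dotProduct_sub, dotProduct_smul, smul_eq_mul,
        dotProduct_neg, smul_neg]
      try ring
    rw [he, hrw] at h0
    linarith
  have keysum := Finset.sum_le_sum key
  rw [Finset.sum_add_distrib, ← Finset.mul_sum, Finset.sum_sub_distrib] at keysum
  -- identities
  have E1 : ∑ i, aa i ⬝ᵥ bl = (∑ i, aa i ⬝ᵥ L) - ∑ i, aa i ⬝ᵥ wt.2 := by
    rw [← Finset.sum_sub_distrib]
    exact Finset.sum_congr rfl fun i _ => by rw [hbl, dotProduct_sub]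
  have E3 : ∑ i, dl ⬝ᵥ bb i = (∑ i, dl ⬝ᵥ uOf ξ i) - ∑ i, dl ⬝ᵥ (A i).mulVec (wt.1 i) := by
    rw [← Finset.sum_sub_distrib]
    exact Finset.sum_congr rfl fun i _ => by rw [hbb, dotProduct_sub]
  have E4 : 1 / β * (dl ⬝ᵥ bl) = (∑ i, dl ⬝ᵥ uOf ξ i) - dl ⬝ᵥ b := by
    have hb : bl = β • ((∑ i, uOf ξ i) - b) := by
      rw [hbl, h.2]; abel
    rw [hb, dotProduct_smul, smul_eq_mul, dotProduct_sub, dot_sum]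
    field_simp
  have hsumneg : ∑ i, -(aa i ⬝ᵥ wt.2) = -∑ i, aa i ⬝ᵥ wt.2 := by
    rw [Finset.sum_neg_distrib]
  rw [hLHS, hdotW, hsumneg]
  simp only [thetaSum]
  linarith [E1, E3, E4, keysum]

lemma skew {p m : ℕ} {n : Fin p → ℕ} (A : (i : Fin p) → Matrix (Fin m) (Fin (n i)) ℝ)
    (b : Fin m → ℝ) (w w' : ((i : Fin p) → Fin (n i) → ℝ) × (Fin m → ℝ)) :
    dotW (w - w') (Fop A b w') + dotW (w' - w) (Fop A b w) = 0 := by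
  unfold dotW Fop
  simp only [Prod.fst_sub, Prod.snd_sub, Pi.sub_apply]
  have h1 : ∀ (v v' : ((i : Fin p) → Fin (n i) → ℝ) × (Fin m → ℝ)), ∀ i : Fin p,
      (v.1 i - v'.1 i) ⬝ᵥ -((A i)ᵀ.mulVec v'.2)
        = -(((A i).mulVec (v.1 i)) ⬝ᵥ v'.2) + ((A i).mulVec (v'.1 i)) ⬝ᵥ v'.2 := by
    intro v v' i
    rw [dotProduct_neg, Matrix.dotProduct_mulVec, Matrix.vecMul_transpose,
      Matrix.mulVec_sub, sub_dotProduct]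
    ring
  rw [Finset.sum_congr rfl fun i _ => h1 w w' i, Finset.sum_congr rfl fun i _ => h1 w' w i]
  simp only [dotProduct_sub, sub_dotProduct, dot_sum, Finset.sum_add_distrib,
     Finset.sum_neg_distrib]
  have c1 : ∀ i, w.2 ⬝ᵥ (A i).mulVec (w'.1 i) = (A i).mulVec (w'.1 i) ⬝ᵥ w.2 :=
    fun i => dotProduct_comm _ _
  have c2 : ∀ i, w'.2 ⬝ᵥ (A i).mulVec (w.1 i) = (A i).mulVec (w.1 i) ⬝ᵥ w'.2 :=
    fun i => dotProduct_comm _ _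
  have c3 : ∀ i, w.2 ⬝ᵥ (A i).mulVec (w.1 i) = (A i).mulVec (w.1 i) ⬝ᵥ w.2 :=
    fun i => dotProduct_comm _ _
  have c4 : ∀ i, w'.2 ⬝ᵥ (A i).mulVec (w'.1 i) = (A i).mulVec (w'.1 i) ⬝ᵥ w'.2 :=
    fun i => dotProduct_comm _ _
  rw [Finset.sum_congr rfl fun i _ => c1 i, Finset.sum_congr rfl fun i _ => c2 i,
    Finset.sum_congr rfl fun i _ => c3 i, Finset.sum_congr rfl fun i _ => c4 i]
  ring

lemma sol_ineq {p m : ℕ} {n : Fin p → ℕ} {β : ℝ} (hβ : 0 < β)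
    (θ : (i : Fin p) → (Fin (n i) → ℝ) → ℝ) (hθ : ∀ i, ConvexOn ℝ Set.univ (θ i))
    (X : (i : Fin p) → Set (Fin (n i) → ℝ)) (hXconv : ∀ i, Convex ℝ (X i))
    (A : (i : Fin p) → Matrix (Fin m) (Fin (n i)) ℝ) (b : Fin m → ℝ)
    {ξ : (Fin p ⊕ Unit) × Fin m → ℝ}
    {wt ws : ((i : Fin p) → Fin (n i) → ℝ) × (Fin m → ℝ)}
    (h : ALMStep β θ X A b ξ wt) (hws : ws ∈ VIsol θ X A b) :
    0 ≤ (Pmap A wt - Pmap A ws) ⬝ᵥ (calQ p m β).mulVec (ξ - Pmap A wt) := by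
  have hwtΩ : wt ∈ OmegaSet m X := fun i => (h.1 i).1
  have f1 := fund hβ θ hθ X hXconv A b h ws hws.1
  have f2 := hws.2 wt hwtΩ
  have f3 := skew A b ws wt
  have hneg : (Pmap A wt - Pmap A ws) ⬝ᵥ (calQ p m β).mulVec (ξ - Pmap A wt)
      = -((Pmap A ws - Pmap A wt) ⬝ᵥ (calQ p m β).mulVec (ξ - Pmap A wt)) := by
    rw [sub_dotProduct, sub_dotProduct]; ring
  rw [hneg]
  linarith

lemma cross_ineq {p m : ℕ} {n : Fin p → ℕ} {β : ℝ} (hβ : 0 < β)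
    (θ : (i : Fin p) → (Fin (n i) → ℝ) → ℝ) (hθ : ∀ i, ConvexOn ℝ Set.univ (θ i))
    (X : (i : Fin p) → Set (Fin (n i) → ℝ)) (hXconv : ∀ i, Convex ℝ (X i))
    (A : (i : Fin p) → Matrix (Fin m) (Fin (n i)) ℝ) (b : Fin m → ℝ)
    {ξ1 ξ2 : (Fin p ⊕ Unit) × Fin m → ℝ}
    {wt1 wt2 : ((i : Fin p) → Fin (n i) → ℝ) × (Fin m → ℝ)}
    (h1 : ALMStep β θ X A b ξ1 wt1) (h2 : ALMStep β θ X A b ξ2 wt2) :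
    0 ≤ (Pmap A wt1 - Pmap A wt2) ⬝ᵥ
        (calQ p m β).mulVec ((ξ1 - Pmap A wt1) - (ξ2 - Pmap A wt2)) := by
  have hΩ1 : wt1 ∈ OmegaSet m X := fun i => (h1.1 i).1
  have hΩ2 : wt2 ∈ OmegaSet m X := fun i => (h2.1 i).1
  have f1 := fund hβ θ hθ X hXconv A b h1 wt2 hΩ2
  have f2 := fund hβ θ hθ X hXconv A b h2 wt1 hΩ1
  have f3 := skew A b wt2 wt1
  have hexp : (Pmap A wt1 - Pmap A wt2) ⬝ᵥ
        (calQ p m β).mulVec ((ξ1 - Pmap A wt1) - (ξ2 - Pmap A wt2))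
      = -((Pmap A wt2 - Pmap A wt1) ⬝ᵥ (calQ p m β).mulVec (ξ1 - Pmap A wt1))
        - (Pmap A wt1 - Pmap A wt2) ⬝ᵥ (calQ p m β).mulVec (ξ2 - Pmap A wt2) := by
    simp only [Matrix.mulVec_sub, dotProduct_sub, sub_dotProduct,
      add_dotProduct, neg_dotProduct]
    ring
  rw [hexp]
  linarith

lemma contraction_step {p m : ℕ} {β α : ℝ} (hβ : 0 < β) (hα : 0 < α)
    (d g ξs ξ ξ' : (Fin p ⊕ Unit) × Fin m → ℝ)
    (hd : ξ' = ξ - α • (calM p m β).mulVec d)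
    (hg : g = ξ - ξs)
    (hsol : 0 ≤ ((ξ - d) - ξs) ⬝ᵥ (calQ p m β).mulVec d) :
    nsq (calH p m β) (ξ - ξ') * ((2 - α) / α)
      ≤ nsq (calH p m β) (ξ - ξs) - nsq (calH p m β) (ξ' - ξs) := by
  have hβ' : β ≠ 0 := hβ.ne'
  set c : (Fin p ⊕ Unit) × Fin m → ℝ := α • (calM p m β).mulVec d with hc
  have h1 : ξ - ξ' = c := by rw [hd]; abel
  have h2 : ξ' - ξs = g - c := by rw [hd, hg]; abel
  -- scalar abbreviations
  have hgc : g ⬝ᵥ (calH p m β).mulVec c = α * (g ⬝ᵥ (calQ p m β).mulVec d) := by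
    rw [hc, Matrix.mulVec_smul, dotProduct_smul, smul_eq_mul, hm_eq_q hβ']
  have hcc : c ⬝ᵥ (calH p m β).mulVec c = α ^ 2 * (d ⬝ᵥ (calD p m β).mulVec d) := by
    rw [hc, Matrix.mulVec_smul, dotProduct_smul, smul_dotProduct,
      smul_eq_mul, smul_eq_mul, mhm_eq_d hβ']
    ring
  have hcg : c ⬝ᵥ (calH p m β).mulVec g = g ⬝ᵥ (calH p m β).mulVec c := Bh_symm _ _ _
  have hsol' : d ⬝ᵥ (calD p m β).mulVec d ≤ g ⬝ᵥ (calQ p m β).mulVec d := by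
    have he : (ξ - d) - ξs = g - d := by rw [hg]; abel
    rw [he, sub_dotProduct] at hsol
    have := Bq_self β d
    linarith
  have hexp : nsq (calH p m β) (g - c)
      = nsq (calH p m β) g - 2 * (g ⬝ᵥ (calH p m β).mulVec c)
        + c ⬝ᵥ (calH p m β).mulVec c := by
    unfold nsq
    simp only [Matrix.mulVec_sub, dotProduct_sub, sub_dotProduct]
    rw [hcg]
    ring
  rw [h1, h2, hexp, ← hg]
  unfold nsq
  rw [hcc, hgc]
  have key : α * (d ⬝ᵥ (calD p m β).mulVec d) ≤ α * (g ⬝ᵥ (calQ p m β).mulVec d) :=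
    mul_le_mul_of_nonneg_left hsol' hα.le
  have hfield : α ^ 2 * (d ⬝ᵥ (calD p m β).mulVec d) * ((2 - α) / α)
      = (2 - α) * (α * (d ⬝ᵥ (calD p m β).mulVec d)) := by
    field_simp
  rw [hfield]
  nlinarith [key]

lemma mono_step {p m : ℕ} {β α : ℝ} (hβ : 0 < β) (hα1 : 0 < α) (hα2 : α ≤ 2)
    (d1 d2 : (Fin p ⊕ Unit) × Fin m → ℝ)
    (hcross : 0 ≤ (α • (calM p m β).mulVec d1 - (d1 - d2)) ⬝ᵥ
        (calQ p m β).mulVec (d1 - d2)) :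
    d2 ⬝ᵥ (calD p m β).mulVec d2 ≤ d1 ⬝ᵥ (calD p m β).mulVec d1 := by
  have hβ' : β ≠ 0 := hβ.ne'
  set e : (Fin p ⊕ Unit) × Fin m → ℝ := d1 - d2 with he
  have h1 : (α • (calM p m β).mulVec d1) ⬝ᵥ (calQ p m β).mulVec e
      = α * (d1 ⬝ᵥ (calD p m β).mulVec e) := by
    rw [smul_dotProduct, smul_eq_mul, mq_eq_d hβ']
  rw [sub_dotProduct, h1] at hcross
  have h2 : e ⬝ᵥ (calQ p m β).mulVec e = e ⬝ᵥ (calD p m β).mulVec e := Bq_self β e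
  have h3 : 0 ≤ e ⬝ᵥ (calD p m β).mulVec e := Bd_nonneg hβ e
  have h4 : d2 = d1 - e := by rw [he]; abel
  have h5 : d2 ⬝ᵥ (calD p m β).mulVec d2
      = d1 ⬝ᵥ (calD p m β).mulVec d1 - 2 * (d1 ⬝ᵥ (calD p m β).mulVec e)
        + e ⬝ᵥ (calD p m β).mulVec e := by
    rw [h4]
    simp only [Matrix.mulVec_sub, dotProduct_sub, sub_dotProduct]
    rw [Bd_symm β e d1]
    ring
  rw [h5]
  nlinarith [hcross]

/-- Point-wise convergence rate: for iterates generated for `k = 0,…,N+1` by the parallel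
splitting ALM step followed by the relaxation step `ξ^{k+1} = ξ^k − αℳ(ξ^k − ξ̃^k)` with
`α ∈ (0,2)`, for every `ξ* ∈ Ξ*`:
`‖ξ^N − ξ^{N+1}‖²_ℋ ≤ (α/((2 − α)(N+1)))‖ξ^0 − ξ*‖²_ℋ`. -/
theorem stmt18 {p m : ℕ} {n : Fin p → ℕ} (hp : 1 ≤ p)
    (θ : (i : Fin p) → (Fin (n i) → ℝ) → ℝ) (hθ : ∀ i, ConvexOn ℝ Set.univ (θ i))
    (X : (i : Fin p) → Set (Fin (n i) → ℝ))
    (hXconv : ∀ i, Convex ℝ (X i)) (hXclosed : ∀ i, IsClosed (X i))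
    (hXne : ∀ i, (X i).Nonempty)
    (A : (i : Fin p) → Matrix (Fin m) (Fin (n i)) ℝ) (b : Fin m → ℝ)
    {β : ℝ} (hβ : 0 < β) {α : ℝ} (hα : α ∈ Set.Ioo (0 : ℝ) 2) (N : ℕ)
    (ξ : ℕ → ((Fin p ⊕ Unit) × Fin m → ℝ))
    (wt : ℕ → ((i : Fin p) → Fin (n i) → ℝ) × (Fin m → ℝ))
    (hstep : ∀ k ≤ N + 1, ALMStep β θ X A b (ξ k) (wt k))
    (hrel : ∀ k ≤ N + 1, ξ (k + 1) = ξ k - α • (calM p m β).mulVec (ξ k - Pmap A (wt k))) :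
    ∀ ξs ∈ Pmap A '' VIsol θ X A b,
      nsq (calH p m β) (ξ N - ξ (N + 1)) ≤
        α / ((2 - α) * (N + 1)) * nsq (calH p m β) (ξ 0 - ξs) := by
  rintro ξs ⟨ws, hws, rfl⟩
  obtain ⟨hα0, hα2⟩ := hα
  have hβ' : β ≠ 0 := hβ.ne'
  set d : ℕ → (Fin p ⊕ Unit) × Fin m → ℝ := fun k => ξ k - Pmap A (wt k) with hdd
  set D : ℕ → ℝ := fun k => d k ⬝ᵥ (calD p m β).mulVec (d k) with hD
  set s : ℕ → ℝ := fun k => nsq (calH p m β) (ξ k - ξ (k + 1)) with hs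
  set f : ℕ → ℝ := fun k => nsq (calH p m β) (ξ k - Pmap A ws) with hf
  -- contraction inequality per step
  have hcontr : ∀ k ≤ N + 1, s k * (2 - α) ≤ α * (f k - f (k + 1)) := by
    intro k hk
    have hc := contraction_step hβ hα0 (d k) (ξ k - Pmap A ws) (Pmap A ws) (ξ k) (ξ (k + 1))
      (hrel k hk) rfl ?_
    · have := mul_le_mul_of_nonneg_left hc hα0.le
      have heq : α * (nsq (calH p m β) (ξ k - ξ (k + 1)) * ((2 - α) / α))
          = s k * (2 - α) := by
        field_simp [hs]
        rfl
      rw [heq] at this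
      linarith [this]
    · have he : ξ k - d k - Pmap A ws = Pmap A (wt k) - Pmap A ws := by
        rw [hdd]; beta_reduce; abel
      rw [he]
      exact sol_ineq hβ θ hθ X hXconv A b (hstep k hk) hws
  -- s k = α² D k
  have hsD : ∀ k ≤ N + 1, s k = α ^ 2 * D k := by
    intro k hk
    have h1 : ξ k - ξ (k + 1) = α • (calM p m β).mulVec (d k) := by
      rw [hrel k hk]; abel
    rw [hs]
    simp only
    rw [h1]
    unfold nsq
    rw [Matrix.mulVec_smul, dotProduct_smul, smul_dotProduct, smul_eq_mul,
      smul_eq_mul, mhm_eq_d hβ']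
    rw [hD]; ring
  -- monotonicity
  have hmono : ∀ k, k + 1 ≤ N + 1 → D (k + 1) ≤ D k := by
    intro k hk
    apply mono_step hβ hα0 hα2.le
    have hcr := cross_ineq hβ θ hθ X hXconv A b (hstep k (by omega)) (hstep (k + 1) hk)
    have he1 : α • (calM p m β).mulVec (d k) = ξ k - ξ (k + 1) := by
      rw [hrel k (by omega)]; abel
    have he2 : α • (calM p m β).mulVec (d k) - (d k - d (k + 1))
        = Pmap A (wt k) - Pmap A (wt (k + 1)) := by
      rw [he1, hdd]; simp only; abel
    have he3 : d k - d (k + 1)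
        = (ξ k - Pmap A (wt k)) - (ξ (k + 1) - Pmap A (wt (k + 1))) := by
      rw [hdd]
    rw [he2, he3]
    exact hcr
  have anti : ∀ j k, j ≤ k → k ≤ N + 1 → D k ≤ D j := by
    intro j k hjk hk
    induction k, hjk using Nat.le_induction with
    | base => exact le_refl _
    | succ k hjk ih => exact (hmono k (by omega)).trans (ih (by omega))
  -- sum bounds
  have hsum1 : (N + 1 : ℝ) * s N ≤ ∑ k ∈ Finset.range (N + 1), s k := by
    have : ∀ k ∈ Finset.range (N + 1), s N ≤ s k := by
      intro k hk
      rw [Finset.mem_range] at hk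
      rw [hsD N (by omega), hsD k (by omega)]
      have := anti k N (by omega) (by omega)
      nlinarith [sq_nonneg α]
    have h := Finset.sum_le_sum this
    rw [Finset.sum_const, Finset.card_range, nsmul_eq_mul] at h
    exact_mod_cast h
  have hsum2 : (2 - α) * ∑ k ∈ Finset.range (N + 1), s k ≤ α * f 0 := by
    have h1 : ∑ k ∈ Finset.range (N + 1), (s k * (2 - α))
        ≤ ∑ k ∈ Finset.range (N + 1), α * (f k - f (k + 1)) := by
      apply Finset.sum_le_sum
      intro k hk
      rw [Finset.mem_range] at hk
      exact hcontr k (by omega)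
    rw [← Finset.sum_mul] at h1
    rw [← Finset.mul_sum, Finset.sum_range_sub' f] at h1
    have h2 : 0 ≤ f (N + 1) := Bh_nonneg hβ _
    have h3 : α * (f 0 - f (N + 1)) ≤ α * f 0 := by nlinarith
    linarith [h1, h3]
  -- finish
  have h2α : (0:ℝ) < 2 - α := by linarith
  have hN1 : (0:ℝ) < (N:ℝ) + 1 := by positivity
  have hpos : (0:ℝ) < (2 - α) * ((N:ℝ) + 1) := by positivity
  have hfin : s N * ((2 - α) * ((N:ℝ) + 1)) ≤ α * f 0 := by
    have := mul_le_mul_of_nonneg_left hsum1 h2α.le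
    nlinarith [hsum2]
  have hgoal : s N ≤ α / ((2 - α) * ((N:ℝ) + 1)) * f 0 := by
    rw [div_mul_eq_mul_div, le_div_iff₀ hpos]
    linarith [hfin]
  convert hgoal using 2 <;> push_cast <;> ring
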